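/- Let h be a quaternion of norm 1, let (b₀, b₁) ∈ ℂ² ∖ {(0,0)}, set q = b₀ + b₁·j, and for θ ∈ ℝ set h_θ = (q⁻¹·(cos θ + (sin θ)·i)·q)·h. Then: (i) h_θ has norm 1; (ii) the complex components of q·h_θ and of q·h represent the same point of ℂP¹ (so the circle action (h, [b₀:b₁])·e^{iθ} = (h_θ, [b₀:b₁]) preserves each fibre of the parametrised Hopf map Φ); and (iii) h_θ = h if and only if cos θ + (sin θ)·i = 1 (so the action is free). -/

import Mathlib

open Quaternion

noncomputable section

/-- The embedding of `ℂ` into the quaternions `ℍ` as the real span of `1` and `i`. -/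
def cq (z : ℂ) : ℍ[ℝ] := ⟨z.re, z.im, 0, 0⟩

/-- The imaginary unit `j` of the quaternions. -/
def jq : ℍ[ℝ] := ⟨0, 0, 1, 0⟩

/-- `σ₀(a₀,a₁) = (1 + (a₁/a₀)·j)/‖1 + (a₁/a₀)·j‖`, defined for `a₀ ≠ 0`. -/
def sigma0 (a₀ a₁ : ℂ) : ℍ[ℝ] := ‖cq 1 + cq (a₁ / a₀) * jq‖⁻¹ • (cq 1 + cq (a₁ / a₀) * jq)

/-- `σ₁(a₀,a₁) = (a₀/a₁ + j)/‖a₀/a₁ + j‖`, defined for `a₁ ≠ 0`. -/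
def sigma1 (a₀ a₁ : ℂ) : ℍ[ℝ] := ‖cq (a₀ / a₁) + jq‖⁻¹ • (cq (a₀ / a₁) + jq)

/-- The complex components of a quaternion: `q = c₀ + c₁·j` with
`c₀ = re q + (im_i q)·i` and `c₁ = im_j q + (im_k q)·i`. -/
def comps (q : ℍ[ℝ]) : ℂ × ℂ := (⟨q.re, q.imI⟩, ⟨q.imJ, q.imK⟩)

/-- The complex projective line `ℂP¹`, as the projectivization of `ℂ²`. -/
abbrev CP1 := Projectivization ℂ (ℂ × ℂ)

/-- The quotient topology on `ℂP¹`. -/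
instance : TopologicalSpace CP1 := instTopologicalSpaceQuotient

@[simp] lemma cq_re (z : ℂ) : (cq z).re = z.re := rfl
@[simp] lemma cq_imI (z : ℂ) : (cq z).imI = z.im := rfl
@[simp] lemma cq_imJ (z : ℂ) : (cq z).imJ = 0 := rfl
@[simp] lemma cq_imK (z : ℂ) : (cq z).imK = 0 := rfl
@[simp] lemma jq_re : jq.re = 0 := rfl
@[simp] lemma jq_imI : jq.imI = 0 := rfl
@[simp] lemma jq_imJ : jq.imJ = 1 := rfl
@[simp] lemma jq_imK : jq.imK = 0 := rfl

lemma comps_cq_mul (c : ℂ) (w : ℍ[ℝ]) : comps (cq c * w) = c • comps w := by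
  simp only [comps, cq_re, cq_imI, cq_imJ, cq_imK, Prod.smul_mk, Prod.mk.injEq, Complex.ext_iff, Quaternion.re_mul,
    Quaternion.imI_mul, Quaternion.imJ_mul, Quaternion.imK_mul, Complex.smul_re,
    Complex.smul_im, Complex.mul_re, Complex.mul_im]
  norm_num

lemma q_ne_zero (b₀ b₁ : ℂ) (hb : ((b₀, b₁) : ℂ × ℂ) ≠ 0) : cq b₀ + cq b₁ * jq ≠ 0 := by
  simp only [Prod.ext_iff, ne_eq, Prod.mk_eq_zero, not_and_or] at hb
  intro hq
  have h1 := congrArg QuaternionAlgebra.re hq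
  have h2 := congrArg QuaternionAlgebra.imI hq
  have h3 := congrArg QuaternionAlgebra.imJ hq
  have h4 := congrArg QuaternionAlgebra.imK hq
  simp [Complex.ext_iff] at *
  tauto

lemma norm_cq_circle (θ : ℝ) : ‖cq ⟨Real.cos θ, Real.sin θ⟩‖ = 1 := by
  have h2 : ‖cq ⟨Real.cos θ, Real.sin θ⟩‖ * ‖cq ⟨Real.cos θ, Real.sin θ⟩‖ = 1 := by
    rw [← Quaternion.normSq_eq_norm_mul_self]
    rw [Quaternion.normSq_def']
    simp [Real.cos_sq_add_sin_sq]
  nlinarith [norm_nonneg (cq ⟨Real.cos θ, Real.sin θ⟩)]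

/-- The circle action `(h,[b₀:b₁])·e^{iθ} = ((q⁻¹·(cos θ + sin θ·i)·q)·h, [b₀:b₁])`, with
`q = b₀ + b₁·j`: it takes values in unit quaternions, preserves each fibre of the
parametrised Hopf map, and is free. -/
theorem circle_action_on_fibres (h : ℍ[ℝ]) (hh : ‖h‖ = 1) (b₀ b₁ : ℂ)
    (hb : ((b₀, b₁) : ℂ × ℂ) ≠ 0) (θ : ℝ) :
    ‖((cq b₀ + cq b₁ * jq)⁻¹ * cq ⟨Real.cos θ, Real.sin θ⟩ * (cq b₀ + cq b₁ * jq)) * h‖ = 1 ∧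
    (∀ (h1 : comps ((cq b₀ + cq b₁ * jq) *
          (((cq b₀ + cq b₁ * jq)⁻¹ * cq ⟨Real.cos θ, Real.sin θ⟩ *
            (cq b₀ + cq b₁ * jq)) * h)) ≠ 0)
       (h2 : comps ((cq b₀ + cq b₁ * jq) * h) ≠ 0),
       Projectivization.mk ℂ _ h1 = Projectivization.mk ℂ _ h2) ∧
    (((cq b₀ + cq b₁ * jq)⁻¹ * cq ⟨Real.cos θ, Real.sin θ⟩ * (cq b₀ + cq b₁ * jq)) * h = h ↔
      cq ⟨Real.cos θ, Real.sin θ⟩ = 1) := by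
  set q : ℍ[ℝ] := cq b₀ + cq b₁ * jq with hqdef
  set z : ℍ[ℝ] := cq ⟨Real.cos θ, Real.sin θ⟩ with hzdef
  have hq : q ≠ 0 := q_ne_zero b₀ b₁ hb
  have hqn : ‖q‖ ≠ 0 := norm_ne_zero_iff.mpr hq
  have hz : ‖z‖ = 1 := norm_cq_circle θ
  have hh0 : h ≠ 0 := by
    intro h0; rw [h0, norm_zero] at hh; norm_num at hh
  have key : q * ((q⁻¹ * z * q) * h) = z * (q * h) := by
    rw [mul_assoc q⁻¹, mul_assoc q⁻¹, ← mul_assoc q, mul_inv_cancel₀ hq, one_mul, mul_assoc]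
  refine ⟨?_, ?_, ?_⟩
  · rw [norm_mul, norm_mul, norm_mul, norm_inv, hz, hh]
    field_simp
  · intro h1 h2
    have hc : (⟨Real.cos θ, Real.sin θ⟩ : ℂ) ≠ 0 := by
      intro hc
      rw [show z = cq ⟨Real.cos θ, Real.sin θ⟩ from rfl, hc] at hz
      have hz0 : cq 0 = (0 : ℍ[ℝ]) := by ext <;> simp [cq]
      rw [hz0] at hz
      simp at hz
    rw [Projectivization.mk_eq_mk_iff]
    refine ⟨Units.mk0 ⟨Real.cos θ, Real.sin θ⟩ hc, ?_⟩
    have : comps (q * ((q⁻¹ * z * q) * h)) = (⟨Real.cos θ, Real.sin θ⟩ : ℂ) • comps (q * h) := by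
      rw [key, hzdef, comps_cq_mul]
    rw [this]
    rfl
  · constructor
    · intro heq
      have h1 : q⁻¹ * z * q = 1 := by
        have := mul_right_cancel₀ hh0 (by rw [heq, one_mul] : (q⁻¹ * z * q) * h = 1 * h)
        exact this
      have h2 : z * q = q := by
        have := congrArg (fun x => q * x) h1
        simpa [← mul_assoc, mul_inv_cancel₀ hq] using this
      exact mul_right_cancel₀ hq (by rw [h2, one_mul])
    · intro heq
      rw [heq, mul_one, inv_mul_cancel₀ hq, one_mul]
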